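/- For the Manneville–Pomeau map $T_\alpha(x)=x(1+2^\alpha x^\alpha)$ on $[0,1/2)$ and $T_\alpha(x)=2x-1$ on $[1/2,1]$, define $y_0=1/2$ and let $y_{n+1}$ be the unique preimage of $y_n$ under $T_\alpha$ in $[0,y_n]$. Then $y_n\searrow 0$ and $y_n\sim n^{-1/\alpha}$, i.e. $\lim_n y_n\, n^{1/\alpha}$ exists in $(0,\infty)$. -/

import Mathlib

open Filter Topology

theorem stmt14 (α : ℝ) (hα : 0 < α)
    (T : ℝ → ℝ)
    (hTdef : ∀ x : ℝ, T x = if x < 1/2 then x * (1 + 2 ^ α * x ^ α) else 2 * x - 1)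
    (y : ℕ → ℝ) (hy0 : y 0 = 1/2)
    (hy : ∀ n : ℕ, y (n + 1) ∈ Set.Icc (0:ℝ) (y n) ∧ T (y (n + 1)) = y n)
    (huniq : ∀ n : ℕ, ∀ z ∈ Set.Icc (0:ℝ) (y n), T z = y n → z = y (n + 1)) :
    StrictAnti y ∧ Tendsto y atTop (nhds 0) ∧
    ∃ c : ℝ, 0 < c ∧
      Tendsto (fun n : ℕ => y n * (n : ℝ) ^ (1 / α)) atTop (nhds c) := by
  -- positivity of y
  have hpos : ∀ n, 0 < y n := by
    intro n
    induction n with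
    | zero => rw [hy0]; norm_num
    | succ n ih =>
      rcases (hy n).1 with ⟨h0, _⟩
      rcases lt_or_eq_of_le h0 with h | h
      · exact h
      · exfalso
        have hT := (hy n).2
        rw [← h, hTdef, if_pos (by norm_num : (0:ℝ) < 1/2)] at hT
        rw [zero_mul] at hT
        exact absurd hT.symm (ne_of_gt ih)
  -- y n ≤ 1/2
  have hle : ∀ n, y n ≤ 1/2 := by
    intro n
    induction n with
    | zero => rw [hy0]
    | succ n ih => exact le_trans (hy n).1.2 ih
  -- y (n+1) < 1/2
  have hlt : ∀ n, y (n + 1) < 1/2 := by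
    intro n
    rcases lt_or_eq_of_le (hle (n + 1)) with h | h
    · exact h
    · exfalso
      have hT := (hy n).2
      rw [hTdef, h, if_neg (lt_irrefl _)] at hT
      have : y n = 0 := by linarith
      exact absurd this (ne_of_gt (hpos n))
  -- recurrence
  have hrec : ∀ n, y n = y (n + 1) * (1 + 2 ^ α * (y (n + 1)) ^ α) := by
    intro n
    have hT := (hy n).2
    rw [hTdef, if_pos (hlt n)] at hT
    exact hT.symm
  have h2pos : (0:ℝ) < 2 ^ α := Real.rpow_pos_of_pos (by norm_num) α
  -- strict antitonicity
  have hanti : StrictAnti y := by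
    apply strictAnti_nat_of_succ_lt
    intro n
    have h1 : 0 < 2 ^ α * (y (n + 1)) ^ α :=
      mul_pos h2pos (Real.rpow_pos_of_pos (hpos _) α)
    calc y (n + 1) = y (n + 1) * 1 := (mul_one _).symm
    _ < y (n + 1) * (1 + 2 ^ α * (y (n + 1)) ^ α) := by
        apply mul_lt_mul_of_pos_left _ (hpos _); linarith
    _ = y n := (hrec n).symm
  -- limit 0
  have hbdd : BddBelow (Set.range y) := ⟨0, fun x ⟨n, hn⟩ => hn ▸ (hpos n).le⟩
  have htendL : Tendsto y atTop (𝓝 (⨅ n, y n)) :=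
    tendsto_atTop_ciInf hanti.antitone hbdd
  set L := ⨅ n, y n with hL
  have hLge : ∀ n, L ≤ y n := fun n => ciInf_le hbdd n
  have hL0 : (0:ℝ) ≤ L := le_ciInf fun n => (hpos n).le
  have hLeq : L = 0 := by
    by_contra h
    have hLpos : 0 < L := lt_of_le_of_ne hL0 (Ne.symm h)
    have hdiff : Tendsto (fun n => y n - y (n + 1)) atTop (𝓝 (L - L)) :=
      htendL.sub (htendL.comp (tendsto_add_atTop_nat 1))
    rw [sub_self] at hdiff
    have hεpos : 0 < L * (2 ^ α * L ^ α) :=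
      mul_pos hLpos (mul_pos h2pos (Real.rpow_pos_of_pos hLpos α))
    have := (hdiff.eventually (eventually_lt_nhds hεpos)).exists
    rcases this with ⟨n, hn⟩
    have hge : L * (2 ^ α * L ^ α) ≤ y n - y (n + 1) := by
      have h1 : y n - y (n + 1) = y (n + 1) * (2 ^ α * (y (n + 1)) ^ α) := by
        rw [hrec n]; ring
      rw [h1]
      have h2 : L ^ α ≤ (y (n + 1)) ^ α :=
        Real.rpow_le_rpow hL0 (hLge (n + 1)) hα.le
      have h3 : 2 ^ α * L ^ α ≤ 2 ^ α * (y (n + 1)) ^ α := by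
        apply mul_le_mul_of_nonneg_left h2 h2pos.le
      exact mul_le_mul (hLge (n + 1)) h3 (mul_nonneg h2pos.le (Real.rpow_nonneg hL0 α)) (hpos _).le
    linarith
  rw [hLeq] at htendL
  refine ⟨hanti, htendL, ?_⟩
  -- set up u n = y n ^ (-α)
  set u : ℕ → ℝ := fun n => (y n) ^ (-α) with hu
  have hune : α ≠ 0 := hα.ne'
  -- key limit:  (1 - (1+t)^(-α))/t → α  as t → 0+
  have hderiv : HasDerivAt (fun t : ℝ => (1 + t) ^ (-α)) (-α) 0 := by
    have h1 : HasDerivAt (fun x : ℝ => x ^ (-α)) (-α * (1:ℝ) ^ (-α - 1)) 1 :=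
      Real.hasDerivAt_rpow_const (Or.inl one_ne_zero)
    have h2 : HasDerivAt (fun t : ℝ => 1 + t) 1 0 :=
      (hasDerivAt_id 0).const_add 1
    have h1' : HasDerivAt (fun x : ℝ => x ^ (-α)) (-α * (1:ℝ) ^ (-α - 1))
        ((fun t : ℝ => 1 + t) 0) := by simpa using h1
    have h3 := h1'.comp (0:ℝ) h2
    exact h3.congr_deriv (by simp)
  have hslope : Tendsto (fun t : ℝ => (1 - (1 + t) ^ (-α)) / t) (𝓝[>] (0:ℝ)) (𝓝 α) := by
    have h1 := hasDerivAt_iff_tendsto_slope.mp hderiv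
    have h2 : Tendsto (slope (fun t : ℝ => (1 + t) ^ (-α)) 0) (𝓝[>] (0:ℝ)) (𝓝 (-α)) :=
      h1.mono_left (nhdsWithin_mono _ (fun x hx => ne_of_gt hx))
    have h3 := h2.neg
    rw [neg_neg] at h3
    apply h3.congr
    intro t
    simp [slope, div_eq_mul_inv]
    ring
  -- t n = 2^α * y(n+1)^α → 0 within Ioi 0
  set t : ℕ → ℝ := fun n => 2 ^ α * (y (n + 1)) ^ α with ht
  have htpos : ∀ n, 0 < t n := fun n =>
    mul_pos h2pos (Real.rpow_pos_of_pos (hpos _) α)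
  have htt0 : Tendsto t atTop (𝓝[>] (0:ℝ)) := by
    apply tendsto_nhdsWithin_of_tendsto_nhds_of_eventually_within
    · have hy1 : Tendsto (fun n => y (n + 1)) atTop (𝓝 0) :=
        htendL.comp (tendsto_add_atTop_nat 1)
      have hcont : ContinuousAt (fun x : ℝ => x ^ α) 0 :=
        Real.continuousAt_rpow_const 0 α (Or.inr hα.le)
      have h1 : Tendsto (fun n => (y (n + 1)) ^ α) atTop (𝓝 ((0:ℝ) ^ α)) :=
        hcont.tendsto.comp hy1
      rw [Real.zero_rpow hune] at h1
      have := h1.const_mul (2 ^ α)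
      simpa using this
    · exact Eventually.of_forall (fun n => htpos n)
  -- the difference u (n+1) - u n
  have hdval : ∀ n, u (n + 1) - u n = 2 ^ α * ((1 - (1 + t n) ^ (-α)) / t n) := by
    intro n
    have hy1pos := hpos (n + 1)
    have hfac : (0:ℝ) < 1 + t n := by linarith [htpos n]
    have hmul : u n = u (n + 1) * (1 + t n) ^ (-α) := by
      rw [hu]
      simp only
      rw [hrec n, Real.mul_rpow hy1pos.le hfac.le]
    have hut : u (n + 1) * t n = 2 ^ α := by
      rw [hu]; simp only [ht]
      rw [← mul_assoc, mul_comm ((y (n+1)) ^ (-α)) (2 ^ α), mul_assoc,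
        ← Real.rpow_add hy1pos]
      simp
    rw [hmul]
    field_simp [(htpos n).ne']
    linear_combination (1 - (1 + t n) ^ (-α)) * hut
  -- u (n+1) - u n → α * 2^α
  have hdtend : Tendsto (fun n => u (n + 1) - u n) atTop (𝓝 (2 ^ α * α)) := by
    have := (hslope.comp htt0).const_mul (2 ^ α)
    apply Tendsto.congr _ this
    intro n
    exact (hdval n).symm
  -- Cesàro: u n / n → 2^α * α
  have hLd : (0:ℝ) < 2 ^ α * α := mul_pos h2pos hα
  have hces : Tendsto (fun n : ℕ => u n / n) atTop (𝓝 (2 ^ α * α)) := by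
    have h1 := hdtend.cesaro
    have h2 : ∀ n : ℕ, ((n:ℝ)⁻¹ * ∑ i ∈ Finset.range n, (u (i + 1) - u i))
        = (u n - u 0) / n := by
      intro n
      rw [Finset.sum_range_sub (fun i => u i)]
      rw [div_eq_inv_mul]
    rw [show (fun n : ℕ => ((n:ℝ)⁻¹ * ∑ i ∈ Finset.range n, (u (i + 1) - u i)))
        = fun n : ℕ => (u n - u 0) / n from funext h2] at h1
    have h3 : Tendsto (fun n : ℕ => u 0 / (n:ℝ)) atTop (𝓝 0) :=
      tendsto_const_div_atTop_nhds_zero_nat (u 0)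
    have h4 := h1.add h3
    rw [add_zero] at h4
    apply h4.congr
    intro n
    rw [sub_div, sub_add_cancel]
  -- conclude
  refine ⟨(2 ^ α * α) ^ (-(1/α)), Real.rpow_pos_of_pos hLd _, ?_⟩
  have hcont : ContinuousAt (fun x : ℝ => x ^ (-(1/α))) (2 ^ α * α) :=
    Real.continuousAt_rpow_const _ _ (Or.inl hLd.ne')
  have h5 : Tendsto (fun n : ℕ => (u n / n) ^ (-(1/α))) atTop
      (𝓝 ((2 ^ α * α) ^ (-(1/α)))) := hcont.tendsto.comp hces
  apply h5.congr'
  filter_upwards [eventually_gt_atTop 0] with n hn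
  have hnpos : (0:ℝ) < n := Nat.cast_pos.mpr hn
  have hupos : 0 < u n := Real.rpow_pos_of_pos (hpos n) _
  rw [Real.div_rpow hupos.le hnpos.le, hu]
  simp only
  rw [← Real.rpow_mul (hpos n).le, Real.rpow_neg hnpos.le, div_eq_mul_inv, inv_inv,
    show -α * -(1/α) = 1 by field_simp, Real.rpow_one]
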